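/- In a compact topological orthoalgebra, the closure of a pairwise compatible subset is pairwise compatible, and consequently every maximal pairwise compatible subset is closed. -/

import Mathlib

/-- An orthoalgebra: a partial commutative, associative operation `oplus`
(defined on the relation `perp`), with unique orthocomplements, in which
`a ⊥ a` forces `a = 0`. -/
structure Orthoalgebra (L : Type*) where
  perp : L → L → Prop
  oplus : L → L → L
  compl : L → L
  zero : L
  one : L
  perp_comm : ∀ a b, perp a b → perp b a
  oplus_comm : ∀ a b, perp a b → oplus a b = oplus b a
  assoc : ∀ a b c, perp b c → perp a (oplus b c) →
    perp a b ∧ perp (oplus a b) c ∧ oplus a (oplus b c) = oplus (oplus a b) c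
  perp_compl : ∀ a, perp a (compl a)
  oplus_compl : ∀ a, oplus a (compl a) = one
  compl_unique : ∀ a b, perp a b → oplus a b = one → b = compl a
  perp_self_eq_zero : ∀ a, perp a a → a = zero
  zero_def : compl one = zero

/-- The induced order: `a ≤ b` iff `a ⊥ b'`. -/
def Orthoalgebra.le {L : Type*} (A : Orthoalgebra L) (a b : L) : Prop :=
  A.perp a (A.compl b)

/-- The partial difference `b ⊖ a = (a ⊕ b')'` (the unique `c` with `b = a ⊕ c` when `a ≤ b`). -/
def Orthoalgebra.ominus {L : Type*} (A : Orthoalgebra L) (b a : L) : L :=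
  A.compl (A.oplus a (A.compl b))

/-- A topological orthoalgebra: `⊥` is closed, `⊕` is continuous on `⊥`,
and `'` is continuous. -/
structure IsTOA {L : Type*} [TopologicalSpace L] (A : Orthoalgebra L) : Prop where
  closed_perp : IsClosed {p : L × L | A.perp p.1 p.2}
  cont_oplus : ContinuousOn (fun p : L × L => A.oplus p.1 p.2) {p : L × L | A.perp p.1 p.2}
  cont_compl : Continuous A.compl

/-- Compatibility: `a` and `b` admit a Mackey decomposition. -/
def Orthoalgebra.Compat {L : Type*} (A : Orthoalgebra L) (a b : L) : Prop :=
  ∃ c, A.le c a ∧ A.le c b ∧ A.perp a (A.ominus b c)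

/-- An atom: a minimal nonzero element. -/
def Orthoalgebra.IsAtom' {L : Type*} (A : Orthoalgebra L) (a : L) : Prop :=
  a ≠ A.zero ∧ ∀ b, A.le b a → b = A.zero ∨ b = a


theorem compat_closed_aux {L : Type*} [TopologicalSpace L] [CompactSpace L]
    (A : Orthoalgebra L) (hA : IsTOA A) :
    IsClosed {p : L × L | A.Compat p.1 p.2} := by
  set S : Set (L × (L × L)) := {q | A.perp q.1 (A.compl q.2.1) ∧ A.perp q.1 (A.compl q.2.2) ∧
      A.perp q.2.1 (A.ominus q.2.2 q.1)} with hSdef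
  have hK1 : IsClosed {q : L × (L × L) | A.perp q.1 (A.compl q.2.1)} := by
    have : Continuous (fun q : L × (L × L) => (q.1, A.compl q.2.1)) :=
      continuous_fst.prodMk (hA.cont_compl.comp (continuous_fst.comp continuous_snd))
    exact hA.closed_perp.preimage this
  have hK2 : IsClosed {q : L × (L × L) | A.perp q.1 (A.compl q.2.2)} := by
    have : Continuous (fun q : L × (L × L) => (q.1, A.compl q.2.2)) :=
      continuous_fst.prodMk (hA.cont_compl.comp (continuous_snd.comp continuous_snd))
    exact hA.closed_perp.preimage this
  set K2 := {q : L × (L × L) | A.perp q.1 (A.compl q.2.2)} with hK2def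
  have hg : Continuous (fun q : L × (L × L) => (q.1, A.compl q.2.2)) :=
    continuous_fst.prodMk (hA.cont_compl.comp (continuous_snd.comp continuous_snd))
  have hf : ContinuousOn (fun q : L × (L × L) => A.ominus q.2.2 q.1) K2 := by
    have h1 : ContinuousOn (fun q : L × (L × L) => A.oplus q.1 (A.compl q.2.2)) K2 :=
      hA.cont_oplus.comp hg.continuousOn (fun q hq => hq)
    exact hA.cont_compl.comp_continuousOn h1
  have hF : ContinuousOn (fun q : L × (L × L) => (q.2.1, A.ominus q.2.2 q.1)) K2 :=
    (continuous_fst.comp continuous_snd).continuousOn.prodMk hf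
  have hC : IsClosed (K2 ∩ (fun q : L × (L × L) => (q.2.1, A.ominus q.2.2 q.1)) ⁻¹'
      {p : L × L | A.perp p.1 p.2}) :=
    hF.preimage_isClosed_of_isClosed hK2 hA.closed_perp
  have hS : IsClosed S := by
    have : S = {q : L × (L × L) | A.perp q.1 (A.compl q.2.1)} ∩
        (K2 ∩ (fun q : L × (L × L) => (q.2.1, A.ominus q.2.2 q.1)) ⁻¹'
          {p : L × L | A.perp p.1 p.2}) := by
      ext q
      simp only [hSdef, Set.mem_setOf_eq, Set.mem_inter_iff, Set.mem_preimage, hK2def]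
      try tauto
    rw [this]
    exact hK1.inter hC
  have himg : IsClosed (Prod.snd '' S) := isClosedMap_snd_of_compactSpace S hS
  have : Prod.snd '' S = {p : L × L | A.Compat p.1 p.2} := by
    ext p
    constructor
    · rintro ⟨⟨c, ab⟩, ⟨h1, h2, h3⟩, rfl⟩
      exact ⟨c, h1, h2, h3⟩
    · rintro ⟨c, h1, h2, h3⟩
      exact ⟨(c, p), ⟨h1, h2, h3⟩, rfl⟩
  rwa [this] at himg

theorem closure_pairwise_compat {L : Type*} [TopologicalSpace L] [CompactSpace L]
    (A : Orthoalgebra L) (hA : IsTOA A) :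
    (∀ M : Set L, (∀ a ∈ M, ∀ b ∈ M, A.Compat a b) →
      ∀ a ∈ closure M, ∀ b ∈ closure M, A.Compat a b) ∧
    (∀ M : Set L, (∀ a ∈ M, ∀ b ∈ M, A.Compat a b) →
      (∀ N : Set L, (∀ a ∈ N, ∀ b ∈ N, A.Compat a b) → M ⊆ N → N = M) →
      IsClosed M) := by
  have hcl := compat_closed_aux A hA
  have key : ∀ M : Set L, (∀ a ∈ M, ∀ b ∈ M, A.Compat a b) →
      ∀ a ∈ closure M, ∀ b ∈ closure M, A.Compat a b := by
    intro M hM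
    have step1 : ∀ a ∈ M, ∀ b ∈ closure M, A.Compat a b := by
      intro a ha b hb
      have hclb : IsClosed {b : L | A.Compat a b} :=
        hcl.preimage (Continuous.prodMk_right a)
      exact closure_minimal (fun x hx => hM a ha x hx) hclb hb
    intro a ha b hb
    have hcla : IsClosed {x : L | A.Compat x b} :=
      hcl.preimage (continuous_id.prodMk continuous_const)
    exact closure_minimal (fun x hx => step1 x hx b hb) hcla ha
  refine ⟨key, ?_⟩
  intro M hM hmax
  have h1 : ∀ a ∈ closure M, ∀ b ∈ closure M, A.Compat a b := key M hM
  have h2 : closure M = M := hmax (closure M) h1 subset_closure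
  rw [← h2]
  exact isClosed_closure
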